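/- Let L be a finite geometric lattice of rank r with the minimal labeling λ induced by a linear order on its atoms, and let (μ_1, …, μ_r) be the label sequence of some maximal chain of L. Then the increasing rearrangement of (μ_1, …, μ_r) is itself the label sequence of a maximal chain of L if and only if it is lexicographically least among the increasing rearrangements of the label sequences of all maximal chains of L. -/

import Mathlib

/-- A finite bounded lattice is *geometric* if it is atomistic (every element is a join
of atoms) and semimodular (whenever distinct `y`, `y'` both cover `x`, the join `y ⊔ y'`
covers both). -/
def IsGeometricLattice (L : Type*) [Lattice L] [BoundedOrder L] : Prop :=
  (∀ x : L, ∃ s : Finset L, (∀ a ∈ s, IsAtom a) ∧ s.sup id = x) ∧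
  (∀ x y y' : L, y ≠ y' → x ⋖ y → x ⋖ y' → y ⋖ (y ⊔ y') ∧ y' ⋖ (y ⊔ y'))

/-- `lab` is the minimal labeling induced by the linear order on the atoms of `L`
represented by the function `f` (injective on atoms): for every cover relation `u ⋖ v`,
`lab u v` is the atom `a ≤ v` with `a ≰ u` having the least value of `f`. -/
def IsMinimalLabeling {L : Type*} [Lattice L] [OrderBot L] (f : L → ℕ) (lab : L → L → L) : Prop :=
  ∀ u v : L, u ⋖ v →
    IsAtom (lab u v) ∧ lab u v ≤ v ∧ ¬ lab u v ≤ u ∧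
    ∀ a : L, IsAtom a → a ≤ v → ¬ a ≤ u → f (lab u v) ≤ f a

/-- `g` is a maximal chain `⊥ = g 0 ⋖ g 1 ⋖ ⋯ ⋖ g r = ⊤`. -/
def IsMaxChainFun {L : Type*} [PartialOrder L] [BoundedOrder L] (r : ℕ)
    (g : Fin (r+1) → L) : Prop :=
  g 0 = ⊥ ∧ g (Fin.last r) = ⊤ ∧ ∀ i : Fin r, g i.castSucc ⋖ g i.succ

/-- The label sequence of the maximal chain `g` with respect to the labeling `lab`. -/
def labelSeq {L : Type*} (lab : L → L → L) {r : ℕ} (g : Fin (r+1) → L) (i : Fin r) : L :=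
  lab (g i.castSucc) (g i.succ)

section Aux
variable {L : Type*} [Lattice L] [Fintype L] [BoundedOrder L]

open Classical in
noncomputable def nextAtom (f : L → ℕ) (x : L) : L :=
  if h : ∃ a : L, (IsAtom a ∧ ¬ a ≤ x) ∧ ∀ b : L, IsAtom b → ¬ b ≤ x → f a ≤ f b
  then h.choose else ⊤

lemma nextAtom_spec (hgeo : IsGeometricLattice L) (f : L → ℕ) {x : L} (hx : x ≠ ⊤) :
    IsAtom (nextAtom f x) ∧ ¬ nextAtom f x ≤ x ∧
      ∀ b : L, IsAtom b → ¬ b ≤ x → f (nextAtom f x) ≤ f b := by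
  have h1 : ∃ a : L, IsAtom a ∧ ¬ a ≤ x := by
    by_contra h
    push_neg at h
    obtain ⟨s, hs, hsup⟩ := hgeo.1 ⊤
    exact hx (le_antisymm le_top (hsup ▸ Finset.sup_le fun b hb => h b (hs b hb)))
  have hex : ∃ a : L, (IsAtom a ∧ ¬ a ≤ x) ∧ ∀ b : L, IsAtom b → ¬ b ≤ x → f a ≤ f b := by
    obtain ⟨a0, ha0⟩ := h1
    obtain ⟨a, ha, hmin⟩ := Set.exists_min_image {a : L | IsAtom a ∧ ¬ a ≤ x} f
      (Set.toFinite _) ⟨a0, ha0⟩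
    exact ⟨a, ha, fun b hb1 hb2 => hmin b ⟨hb1, hb2⟩⟩
  rw [nextAtom, dif_pos hex]
  obtain ⟨ha, hmin⟩ := hex.choose_spec
  exact ⟨ha.1, ha.2, hmin⟩

lemma atom_sup_covBy (hgeo : IsGeometricLattice L) :
    ∀ x a : L, IsAtom a → ¬ a ≤ x → x ⋖ x ⊔ a := by
  intro x
  induction x using WellFoundedLT.induction with
  | _ x IH =>
    intro a ha hax
    rcases eq_or_ne x ⊥ with rfl | hx
    · simpa using ha.bot_covBy
    · obtain ⟨x', hx'⟩ : ∃ x', x' ⋖ x := by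
        have hne : ({y : L | y < x}).Nonempty := ⟨⊥, bot_lt_iff_ne_bot.2 hx⟩
        obtain ⟨x', hx'mem, hmax⟩ :=
          Set.Finite.exists_maximalFor id _ (Set.toFinite {y : L | y < x}) hne
        refine ⟨x', hx'mem, fun z hz1 hz2 => ?_⟩
        exact absurd (hmax hz2 hz1.le) (not_le_of_gt hz1)
      have hax' : ¬ a ≤ x' := fun h => hax (h.trans hx'.le)
      have h1 : x' ⋖ x' ⊔ a := IH x' hx'.lt a ha hax'
      have hne2 : x ≠ x' ⊔ a := fun h => hax (h ▸ le_sup_right)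
      have h2 := (hgeo.2 x' x (x' ⊔ a) hne2 hx' h1).1
      have : x ⊔ (x' ⊔ a) = x ⊔ a := by
        rw [← sup_assoc, sup_eq_left.2 hx'.le]
      exact this ▸ h2
end Aux

section Aux2
variable {L : Type*} [Lattice L] [Fintype L] [BoundedOrder L] {r : ℕ}

lemma nat_chain_strict {c : ℕ → L} {k : ℕ} (h : ∀ i < k, c i < c (i+1)) :
    ∀ i j, i < j → j ≤ k → c i < c j := by
  intro i j
  induction j with
  | zero => omega
  | succ j ih =>
    intro hij hjk
    have hcj : c j < c (j+1) := h j (by omega)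
    rcases Nat.lt_or_ge i j with h' | h'
    · exact (ih h' (by omega)).trans hcj
    · have : i = j := by omega
      subst this; exact hcj

lemma chain_le (hrank : ∀ c : Set L, IsMaxChain (· ≤ ·) c → c.ncard = r + 1)
    {k : ℕ} (c : Fin (k+1) → L) (hc : StrictMono c) : k ≤ r := by
  have hchain : IsChain (· ≤ ·) (Set.range c) := by
    rintro _ ⟨i, rfl⟩ _ ⟨j, rfl⟩ _
    rcases le_total i j with h | h
    · exact Or.inl (hc.monotone h)
    · exact Or.inr (hc.monotone h)
  obtain ⟨t, ht, hsub⟩ := hchain.exists_maxChain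
  have h1 := hrank t ht
  have h2 : (Set.range c).ncard = k+1 := by
    rw [← Set.image_univ, Set.ncard_image_of_injective _ hc.injective, Set.ncard_univ]
    simp
  have := Set.ncard_le_ncard hsub (Set.toFinite t)
  omega

lemma covchain_eq (hrank : ∀ c : Set L, IsMaxChain (· ≤ ·) c → c.ncard = r + 1)
    {k : ℕ} {c : ℕ → L} (h0 : c 0 = ⊥) (hk : c k = ⊤)
    (hcov : ∀ i < k, c i ⋖ c (i+1)) : k = r := by
  classical
  have hstrict := nat_chain_strict (c := c) (k := k) (fun i hi => (hcov i hi).lt)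
  have hle : k ≤ r := by
    refine chain_le hrank (fun i : Fin (k+1) => c i) ?_
    intro i j hij
    exact hstrict i j hij (by omega)
  -- now the lower bound
  have hchain : IsChain (· ≤ ·) (((Finset.range (k+1)).image c : Finset L) : Set L) := by
    intro x hx y hy _
    simp only [Finset.coe_image, Set.mem_image, Finset.coe_range, Set.mem_Iio] at hx hy
    obtain ⟨i, hi, rfl⟩ := hx
    obtain ⟨j, hj, rfl⟩ := hy
    rcases le_or_gt i j with h | h
    · rcases eq_or_lt_of_le h with rfl | h
      · exact Or.inl le_rfl
      · exact Or.inl (hstrict i j h (by omega)).le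
    · exact Or.inr (hstrict j i h (by omega)).le
  obtain ⟨t, ht, hsub⟩ := hchain.exists_maxChain
  have htc : t ⊆ (((Finset.range (k+1)).image c : Finset L) : Set L) := by
    intro z hz
    have hmem : ∀ i, i ≤ k → c i ∈ t := by
      intro i hi
      apply hsub
      simp only [Finset.coe_image, Set.mem_image, Finset.coe_range, Set.mem_Iio]
      exact ⟨i, by omega, rfl⟩
    have hsne : (0:ℕ) ∈ (Finset.range (k+1)).filter (fun i => c i ≤ z) := by
      simp [h0]
    obtain ⟨i, himem, hmax⟩ := Finset.exists_max_image
      ((Finset.range (k+1)).filter (fun i => c i ≤ z)) id ⟨0, hsne⟩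
    have hik : i ≤ k := by
      have := (Finset.mem_filter.1 himem).1
      simp only [Finset.mem_range] at this
      omega
    have hiz : c i ≤ z := (Finset.mem_filter.1 himem).2
    rcases eq_or_lt_of_le hik with heq | hik'
    · subst heq
      simp only [Finset.coe_image, Set.mem_image, Finset.coe_range, Set.mem_Iio]
      refine ⟨i, by omega, ?_⟩
      have hz2 : z ≤ c i := by rw [hk]; exact le_top
      exact le_antisymm hiz hz2
    · have hnot : ¬ c (i+1) ≤ z := by
        intro hcc
        have hmem1 : i + 1 ∈ (Finset.range (k+1)).filter (fun i => c i ≤ z) :=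
          Finset.mem_filter.2 ⟨Finset.mem_range.2 (by omega), hcc⟩
        have := hmax _ hmem1
        simp only [id] at this
        omega
      rcases eq_or_ne z (c (i+1)) with rfl | hne
      · simp only [Finset.coe_image, Set.mem_image, Finset.coe_range, Set.mem_Iio]
        exact ⟨i+1, by omega, rfl⟩
      · have hcomp := ht.1 (hmem (i+1) (by omega)) hz hne.symm
        have hzlt : z < c (i+1) := by
          rcases hcomp with h | h
          · exact absurd h hnot
          · exact lt_of_le_of_ne h hne
        have : z = c i := by
          by_contra hzz
          have : c i < z := lt_of_le_of_ne hiz (Ne.symm hzz)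
          exact (hcov i (by omega)).2 this hzlt
        simp only [Finset.coe_image, Set.mem_image, Finset.coe_range, Set.mem_Iio]
        exact ⟨i, by omega, this.symm⟩
  have hteq : t = (((Finset.range (k+1)).image c : Finset L) : Set L) :=
    le_antisymm htc hsub
  have h1 := hrank t ht
  have h2 : ((Finset.range (k+1)).image c : Finset L).card = k + 1 := by
    rw [Finset.card_image_of_injOn, Finset.card_range]
    intro i hi j hj hij
    simp only [Finset.coe_range, Set.mem_Iio] at hi hj
    by_contra hne
    rcases Nat.lt_or_ge i j with h | h
    · exact absurd hij (ne_of_lt (hstrict i j h (by omega)))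
    · exact absurd hij.symm (ne_of_lt (hstrict j i (by omega) (by omega)))
  rw [hteq, Set.ncard_coe_finset, h2] at h1
  omega

end Aux2
section Greedy
variable {L : Type*} [Lattice L] [Fintype L] [BoundedOrder L] {r : ℕ}

noncomputable def greedy (f : L → ℕ) : ℕ → L
  | 0 => ⊥
  | n+1 => greedy f n ⊔ nextAtom f (greedy f n)

variable (hgeo : IsGeometricLattice L)
  (hrank : ∀ c : Set L, IsMaxChain (· ≤ ·) c → c.ncard = r + 1)
  (f : L → ℕ)

include hgeo in
lemma greedy_covby {n : ℕ} (hn : greedy f n ≠ ⊤) : greedy f n ⋖ greedy f (n+1) := by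
  obtain ⟨h1, h2, _⟩ := nextAtom_spec hgeo f hn
  exact atom_sup_covBy hgeo _ _ h1 h2

include hgeo hrank in
lemma greedy_top : greedy f r = ⊤ ∧ ∀ n < r, greedy f n ≠ ⊤ := by
  classical
  have hex : ∃ m, greedy f m = ⊤ := by
    by_contra h
    push_neg at h
    have hcov : ∀ i < r + 1, greedy f i < greedy f (i+1) :=
      fun i _ => (greedy_covby hgeo f (h i)).lt
    have hstrict := nat_chain_strict hcov
    have := chain_le hrank (fun i : Fin (r+2) => greedy f i)
      (fun i j hij => hstrict i j hij (by omega))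
    omega
  have hm := Nat.find_spec hex
  have hmin := fun n (hn : n < Nat.find hex) => Nat.find_min hex hn
  have heq : Nat.find hex = r := by
    refine covchain_eq hrank rfl hm (fun i hi => greedy_covby hgeo f (hmin i hi))
  exact ⟨heq ▸ hm, fun n hn => hmin n (by omega)⟩

include hgeo hrank in
lemma greedy_cov {n : ℕ} (hn : n < r) : greedy f n ⋖ greedy f (n+1) :=
  greedy_covby hgeo f ((greedy_top hgeo hrank f).2 n hn)

include hgeo hrank in
lemma greedy_mono : ∀ {i j : ℕ}, i ≤ j → j ≤ r → greedy f i ≤ greedy f j := by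
  intro i j hij hjr
  rcases eq_or_lt_of_le hij with rfl | h
  · exact le_rfl
  · exact (nat_chain_strict (fun m hm => (greedy_cov hgeo hrank f hm).lt) i j h hjr).le

include hgeo hrank in
lemma greedy_atom_spec {n : ℕ} (hn : n < r) :
    IsAtom (nextAtom f (greedy f n)) ∧ ¬ nextAtom f (greedy f n) ≤ greedy f n ∧
      ∀ b : L, IsAtom b → ¬ b ≤ greedy f n → f (nextAtom f (greedy f n)) ≤ f b :=
  nextAtom_spec hgeo f ((greedy_top hgeo hrank f).2 n hn)

include hgeo hrank in
lemma greedy_lab (hf : Set.InjOn f {a : L | IsAtom a})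
    (lab : L → L → L) (hlab : IsMinimalLabeling f lab) {n : ℕ} (hn : n < r) :
    lab (greedy f n) (greedy f (n+1)) = nextAtom f (greedy f n) := by
  obtain ⟨ha, hale, hmin⟩ := greedy_atom_spec hgeo hrank f hn
  obtain ⟨hl1, hl2, hl3, hl4⟩ := hlab _ _ (greedy_cov hgeo hrank f hn)
  have h1 : f (lab (greedy f n) (greedy f (n+1))) ≤ f (nextAtom f (greedy f n)) :=
    hl4 _ ha le_sup_right hale
  have h2 : f (nextAtom f (greedy f n)) ≤ f (lab (greedy f n) (greedy f (n+1))) :=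
    hmin _ hl1 hl3
  exact hf hl1 ha (le_antisymm h1 h2)

include hgeo hrank in
lemma greedy_lab_strict (hf : Set.InjOn f {a : L | IsAtom a}) {n m : ℕ}
    (hnm : n < m) (hm : m < r) :
    f (nextAtom f (greedy f n)) < f (nextAtom f (greedy f m)) := by
  obtain ⟨han, hann, hminn⟩ := greedy_atom_spec hgeo hrank f (hnm.trans hm)
  obtain ⟨ham, hamm, hminm⟩ := greedy_atom_spec hgeo hrank f hm
  have hgnm : greedy f (n+1) ≤ greedy f m := greedy_mono hgeo hrank f hnm (by omega)
  have hmn : ¬ nextAtom f (greedy f m) ≤ greedy f n := by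
    intro h
    exact hamm (h.trans (greedy_mono hgeo hrank f (by omega) (by omega)))
  have hle : f (nextAtom f (greedy f n)) ≤ f (nextAtom f (greedy f m)) := hminn _ ham hmn
  rcases eq_or_lt_of_le hle with heq | h
  · exfalso
    have := hf han ham heq
    exact hamm (this ▸ (le_sup_right.trans hgnm))
  · exact h

end Greedy
section Chains
variable {L : Type*} [Lattice L] [Fintype L] [BoundedOrder L] {r : ℕ}

variable (hgeo : IsGeometricLattice L)
  (hrank : ∀ c : Set L, IsMaxChain (· ≤ ·) c → c.ncard = r + 1)
  (f : L → ℕ) (hf : Set.InjOn f {a : L | IsAtom a})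
  (lab : L → L → L) (hlab : IsMinimalLabeling f lab)

lemma maxfun_strictMono {M' : Fin (r+1) → L} (hM' : IsMaxChainFun r M') :
    StrictMono M' :=
  Fin.strictMono_iff_lt_succ.2 fun i => (hM'.2.2 i).lt

include hlab in
lemma label_spec {M' : Fin (r+1) → L} (hM' : IsMaxChainFun r M') (j : Fin r) :
    IsAtom (labelSeq lab M' j) ∧ labelSeq lab M' j ≤ M' j.succ ∧
      ¬ labelSeq lab M' j ≤ M' j.castSucc ∧
      ∀ a : L, IsAtom a → a ≤ M' j.succ → ¬ a ≤ M' j.castSucc →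
        f (labelSeq lab M' j) ≤ f a :=
  hlab _ _ (hM'.2.2 j)

include hf hlab in
lemma label_inj {M' : Fin (r+1) → L} (hM' : IsMaxChainFun r M') :
    Function.Injective fun j : Fin r => f (labelSeq lab M' j) := by
  have key : ∀ j j' : Fin r, j < j' →
      f (labelSeq lab M' j) = f (labelSeq lab M' j') → False := by
    intro j j' hjj' heq
    have h1 := label_spec f lab hlab hM' j
    have h2 := label_spec f lab hlab hM' j'
    have heqb : labelSeq lab M' j = labelSeq lab M' j' := hf h1.1 h2.1 heq
    have hle : M' j.succ ≤ M' j'.castSucc := by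
      apply (maxfun_strictMono hM').monotone
      rw [Fin.le_def]
      simp only [Fin.val_succ, Fin.coe_castSucc]
      exact hjj'
    exact h2.2.2.1 (heqb ▸ (h1.2.1.trans hle))
  intro j j' heq
  by_contra hne
  rcases lt_or_gt_of_ne hne with h | h
  · exact key j j' h heq
  · exact key j' j h heq.symm

include hgeo hrank hf hlab in
lemma dom_lemma {M' : Fin (r+1) → L} (hM' : IsMaxChainFun r M')
    {l' : List ℕ} (hsort' : l'.Pairwise (· ≤ ·))
    (hperm' : l'.Perm (List.ofFn fun i => f (labelSeq lab M' i)))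
    {i : ℕ} (hi : i < r) (hi' : i < l'.length) :
    f (nextAtom f (greedy f i)) ≤ l'[i] := by
  classical
  by_contra hcon
  push_neg at hcon
  have hlen : l'.length = r := by rw [hperm'.length_eq, List.length_ofFn]
  have hvinj : Function.Injective fun j : Fin r => f (labelSeq lab M' j) :=
    label_inj f hf lab hlab hM'
  have hnodup : l'.Nodup := (hperm'.nodup_iff).2 (List.nodup_ofFn.2 hvinj)
  set J : Finset (Fin r) :=
    Finset.univ.filter (fun j : Fin r => f (labelSeq lab M' j) ≤ l'[i]) with hJ
  have hJcard : i + 1 ≤ J.card := by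
    have htake : (l'.take (i+1)).Nodup := (List.take_sublist _ _).nodup hnodup
    have hAcard : (l'.take (i+1)).toFinset.card = i + 1 := by
      rw [List.toFinset_card_of_nodup htake, List.length_take]
      omega
    have hAsub : (l'.take (i+1)).toFinset ⊆
        J.image (fun j => f (labelSeq lab M' j)) := by
      intro x hx
      rw [List.mem_toFinset] at hx
      obtain ⟨k, hk, hgk⟩ := List.mem_iff_getElem.1 hx
      have hk' : k < i + 1 := by
        have : (l'.take (i+1)).length = min (i+1) l'.length := List.length_take
        omega
      have hkl : k < l'.length := by omega
      have hxval : x = l'[k] := by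
        rw [← hgk, List.getElem_take]
      have hxle : x ≤ l'[i] := by
        rw [hxval]
        rcases eq_or_lt_of_le (show k ≤ i by omega) with rfl | hki
        · exact le_rfl
        · exact List.pairwise_iff_getElem.1 hsort' k i hkl hi' hki
      have hxmem : x ∈ l' := List.mem_of_mem_take hx
      have hxofn : x ∈ List.ofFn fun j : Fin r => f (labelSeq lab M' j) :=
        hperm'.subset hxmem
      rw [List.mem_ofFn] at hxofn
      obtain ⟨j, hj⟩ := hxofn
      refine Finset.mem_image.2 ⟨j, Finset.mem_filter.2 ⟨Finset.mem_univ _, ?_⟩, hj⟩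
      rw [hj]
      exact hxle
    calc i + 1 = (l'.take (i+1)).toFinset.card := hAcard.symm
      _ ≤ (J.image (fun j => f (labelSeq lab M' j))).card := Finset.card_le_card hAsub
      _ ≤ J.card := Finset.card_image_le
  obtain ⟨hgi_atom, hgi_nle, hgi_min⟩ := greedy_atom_spec hgeo hrank f hi
  have hJle : ∀ j ∈ J, labelSeq lab M' j ≤ greedy f i := by
    intro j hj
    have hjle : f (labelSeq lab M' j) ≤ l'[i] := (Finset.mem_filter.1 hj).2
    by_contra h
    have := hgi_min _ (label_spec f lab hlab hM' j).1 h
    omega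
  set e := J.orderEmbOfCardLe hJcard with he
  set u : ℕ → L := fun m => Nat.rec ⊥
    (fun m um => um ⊔ (if h : m < i+1 then labelSeq lab M' (e ⟨m, h⟩) else ⊤)) m with hu
  have husucc : ∀ m (h : m < i + 1),
      u (m+1) = u m ⊔ labelSeq lab M' (e ⟨m, h⟩) := by
    intro m h
    show u m ⊔ _ = _
    rw [dif_pos h]
  have hub : ∀ m (hm : m ≤ i + 1), (u m ≤ greedy f i ∧
      ∀ j : Fin r, (∀ m' (hm' : m' < m), e ⟨m', by omega⟩ < j) → u m ≤ M' j.castSucc) := by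
    intro m
    induction m with
    | zero => exact fun _ => ⟨bot_le, fun _ _ => bot_le⟩
    | succ m IH =>
      intro hm1
      have hmlt : m < i + 1 := by omega
      obtain ⟨IH1, IH2⟩ := IH (by omega)
      rw [husucc m hmlt]
      constructor
      · exact sup_le IH1 (hJle _ (J.orderEmbOfCardLe_mem hJcard ⟨m, hmlt⟩))
      · intro j hj
        refine sup_le (IH2 j (fun m' hm' => hj m' (by omega))) ?_
        have h1 : labelSeq lab M' (e ⟨m, hmlt⟩) ≤ M' (e ⟨m, hmlt⟩).succ :=
          (label_spec f lab hlab hM' _).2.1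
        refine h1.trans ((maxfun_strictMono hM').monotone ?_)
        rw [Fin.le_def]
        simp only [Fin.val_succ, Fin.coe_castSucc]
        exact hj m (by omega)
  have hustrict : ∀ m (hm : m < i + 1), u m < u (m+1) := by
    intro m hm
    have h1 : u m ≤ M' (e ⟨m, hm⟩).castSucc := by
      refine (hub m (by omega)).2 _ (fun m' hm' => ?_)
      exact e.strictMono (by exact Fin.mk_lt_mk.2 hm')
    rw [husucc m hm]
    refine lt_of_le_of_ne le_sup_left (fun heq => ?_)
    have : labelSeq lab M' (e ⟨m, hm⟩) ≤ u m := sup_eq_left.1 heq.symm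
    exact (label_spec f lab hlab hM' _).2.2.1 (this.trans h1)
  set d : ℕ → L := fun m => if m ≤ i + 1 then u m else greedy f (m - 1) with hd
  have hdlt : ∀ m < r + 1, d m < d (m+1) := by
    intro m hm
    by_cases h1 : m + 1 ≤ i + 1
    · have h2 : m ≤ i + 1 := by omega
      simp only [hd, if_pos h1, if_pos h2]
      exact hustrict m (by omega)
    · by_cases h2 : m ≤ i + 1
      · have hm2 : m = i + 1 := by omega
        simp only [hd, if_pos h2, if_neg h1]
        have : m + 1 - 1 = i + 1 := by omega
        rw [this]
        calc u m ≤ greedy f i := hm2 ▸ (hub (i+1) le_rfl).1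
          _ < greedy f (i+1) := (greedy_cov hgeo hrank f hi).lt
      · have h3 : ¬ m + 1 ≤ i + 1 := by omega
        simp only [hd, if_neg h2, if_neg h3]
        have h4 : m + 1 - 1 = (m - 1) + 1 := by omega
        rw [h4]
        exact (greedy_cov hgeo hrank f (by omega)).lt
  have hstrict := nat_chain_strict hdlt
  have := chain_le hrank (fun t : Fin (r+2) => d t)
    (fun t t' h => hstrict t t' h (by omega))
  omega
end Chains
section Uniq
variable {L : Type*} [Lattice L] [Fintype L] [BoundedOrder L] {r : ℕ}
variable (hgeo : IsGeometricLattice L)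
  (hrank : ∀ c : Set L, IsMaxChain (· ≤ ·) c → c.ncard = r + 1)
  (f : L → ℕ) (hf : Set.InjOn f {a : L | IsAtom a})
  (lab : L → L → L) (hlab : IsMinimalLabeling f lab)

include hgeo hrank hf hlab in
lemma uniq_lemma {M' : Fin (r+1) → L} (hM' : IsMaxChainFun r M')
    (hsorted : (List.ofFn fun i => f (labelSeq lab M' i)).Pairwise (· ≤ ·)) :
    ∀ n (hn : n ≤ r), M' ⟨n, by omega⟩ = greedy f n := by
  classical
  have hmono : Monotone fun i : Fin r => f (labelSeq lab M' i) :=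
    List.sortedLE_ofFn_iff.1 hsorted.sortedLE
  intro n
  induction n with
  | zero =>
    intro _
    have h0 : (⟨0, by omega⟩ : Fin (r+1)) = 0 := by
      ext; simp
    rw [h0, hM'.1]
    rfl
  | succ n IH =>
    intro hn1
    have hn : n < r := by omega
    have hgn : M' (⟨n, by omega⟩ : Fin (r+1)) = greedy f n := IH (by omega)
    set jn : Fin r := ⟨n, hn⟩ with hjn
    have hcast : jn.castSucc = (⟨n, by omega⟩ : Fin (r+1)) := by
      ext; simp [hjn]
    obtain ⟨hb1, hb2, hb3, hb4⟩ := label_spec f lab hlab hM' jn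
    have hbgn : ¬ labelSeq lab M' jn ≤ greedy f n := by
      rw [← hgn, ← hcast]; exact hb3
    obtain ⟨ha1, ha2, hamin⟩ := greedy_atom_spec hgeo hrank f hn
    have h1 : f (nextAtom f (greedy f n)) ≤ f (labelSeq lab M' jn) :=
      hamin _ hb1 hbgn
    set an := nextAtom f (greedy f n) with han
    set T : Finset (Fin r) :=
      Finset.univ.filter (fun j : Fin r => n ≤ (j : ℕ) ∧ an ≤ M' j.succ) with hT
    have hTne : T.Nonempty := by
      refine ⟨⟨r-1, by omega⟩, Finset.mem_filter.2 ⟨Finset.mem_univ _, by simp; omega, ?_⟩⟩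
      have : (⟨r-1, by omega⟩ : Fin r).succ = Fin.last r := by
        ext; simp; omega
      rw [this, hM'.2.1]
      exact le_top
    obtain ⟨j0, hj0mem, hj0min⟩ := Finset.exists_min_image T (fun j => (j : ℕ)) hTne
    obtain ⟨-, hj0n, hj0le⟩ := Finset.mem_filter.1 hj0mem
    have hj0not : ¬ an ≤ M' j0.castSucc := by
      rcases eq_or_lt_of_le hj0n with heq | hlt
      · have : j0.castSucc = (⟨n, by omega⟩ : Fin (r+1)) := by
          ext; simp [← heq]
        rw [this, hgn]
        exact ha2
      · intro hcontra
        have hj' : (⟨(j0 : ℕ) - 1, by omega⟩ : Fin r) ∈ T := by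
          refine Finset.mem_filter.2 ⟨Finset.mem_univ _, by simp; omega, ?_⟩
          have : (⟨(j0 : ℕ) - 1, by omega⟩ : Fin r).succ = j0.castSucc := by
            ext; simp; omega
          rw [this]
          exact hcontra
        have := hj0min _ hj'
        simp only at this
        omega
    have h2 : f (labelSeq lab M' j0) ≤ f an :=
      (label_spec f lab hlab hM' j0).2.2.2 _ ha1 hj0le hj0not
    have h3 : f (labelSeq lab M' jn) ≤ f (labelSeq lab M' j0) := by
      refine hmono ?_
      rw [Fin.le_def]
      exact hj0n
    have heqb : labelSeq lab M' jn = an :=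
      hf hb1 ha1 (le_antisymm (h3.trans h2) h1)
    have hcovM : M' jn.castSucc ⋖ M' jn.succ := hM'.2.2 jn
    have hgdef : greedy f (n+1) = greedy f n ⊔ an := rfl
    have hlow : greedy f (n+1) ≤ M' jn.succ := by
      rw [hgdef]
      refine sup_le ?_ (heqb ▸ hb2)
      rw [← hgn, ← hcast]
      exact hcovM.le
    have hfin : greedy f (n+1) = M' jn.succ := by
      rcases eq_or_lt_of_le hlow with h | h
      · exact h
      · exfalso
        refine hcovM.2 ?_ h
        rw [hcast, hgn]
        exact (greedy_cov hgeo hrank f hn).lt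
    have hsucc : jn.succ = (⟨n+1, by omega⟩ : Fin (r+1)) := by
      ext; simp [hjn]
    rw [← hsucc]
    exact hfin.symm

include hgeo hrank hf hlab in
lemma uniq_labels {M' : Fin (r+1) → L} (hM' : IsMaxChainFun r M')
    (hsorted : (List.ofFn fun i => f (labelSeq lab M' i)).Pairwise (· ≤ ·)) :
    (List.ofFn fun i => f (labelSeq lab M' i)) =
      List.ofFn (fun i : Fin r => f (nextAtom f (greedy f (i : ℕ)))) := by
  refine List.ofFn_inj.2 (funext fun i => ?_)
  have huniq := uniq_lemma hgeo hrank f hf lab hlab hM' hsorted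
  have hc : M' i.castSucc = greedy f (i : ℕ) := by
    have h1 : i.castSucc = (⟨(i : ℕ), by omega⟩ : Fin (r+1)) := by ext; simp
    rw [h1]; exact huniq _ (by omega)
  have hs : M' i.succ = greedy f ((i : ℕ) + 1) := by
    have h1 : i.succ = (⟨(i : ℕ) + 1, by omega⟩ : Fin (r+1)) := by ext; simp
    rw [h1]; exact huniq _ (by omega)
  show f (lab (M' i.castSucc) (M' i.succ)) = _
  rw [hc, hs, greedy_lab hgeo hrank f hf lab hlab i.isLt]

end Uniq

lemma pointwise_lex : ∀ (l1 l2 : List ℕ), l1.length = l2.length →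
    (∀ k (h1 : k < l1.length) (h2 : k < l2.length), l1[k] ≤ l2[k]) →
    l1 = l2 ∨ List.Lex (· < ·) l1 l2 := by
  intro l1
  induction l1 with
  | nil =>
    intro l2 hlen _
    cases l2 with
    | nil => exact Or.inl rfl
    | cons b t2 => simp at hlen
  | cons a t1 ih =>
    intro l2 hlen hp
    cases l2 with
    | nil => simp at hlen
    | cons b t2 =>
      have hab : a ≤ b := hp 0 (by simp) (by simp)
      rcases lt_or_eq_of_le hab with h | h
      · exact Or.inr (List.Lex.rel h)
      · subst h
        rcases ih t2 (by simpa using hlen)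
            (fun k h1 h2 => hp (k+1) (by simpa using h1) (by simpa using h2)) with
          rfl | hl
        · exact Or.inl rfl
        · exact Or.inr (List.Lex.cons hl)


/-- Let `(μ_1, …, μ_r)` be the label sequence of a maximal chain `M` of a finite geometric
lattice of rank `r` with a minimal labeling, and let `l` be its increasing rearrangement
(read through `f`). Then `l` is the label sequence of a maximal chain of `L` iff `l` is
lexicographically least among the increasing rearrangements of the label sequences of all
maximal chains of `L`. -/
theorem stmt8 (L : Type*) [Lattice L] [Fintype L] [BoundedOrder L] (r : ℕ)
    (hgeo : IsGeometricLattice L)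
    (hrank : ∀ c : Set L, IsMaxChain (· ≤ ·) c → c.ncard = r + 1)
    (f : L → ℕ) (hf : Set.InjOn f {a : L | IsAtom a})
    (lab : L → L → L) (hlab : IsMinimalLabeling f lab)
    (M : Fin (r+1) → L) (hM : IsMaxChainFun r M)
    (l : List ℕ) (hsort : l.Pairwise (· ≤ ·))
    (hperm : l.Perm (List.ofFn fun i => f (labelSeq lab M i))) :
    (∃ M' : Fin (r+1) → L, IsMaxChainFun r M' ∧
        (List.ofFn fun i => f (labelSeq lab M' i)) = l) ↔
    (∀ M' : Fin (r+1) → L, IsMaxChainFun r M' →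
      ∀ l' : List ℕ, l'.Pairwise (· ≤ ·) →
        l'.Perm (List.ofFn fun i => f (labelSeq lab M' i)) →
        l = l' ∨ List.Lex (· < ·) l l') := by
  classical
  set G : Fin (r+1) → L := fun i => greedy f (i : ℕ) with hGdef
  have hG : IsMaxChainFun r G := by
    refine ⟨?_, ?_, ?_⟩
    · show greedy f ((0 : Fin (r+1)) : ℕ) = ⊥
      rw [Fin.val_zero]
      rfl
    · show greedy f ((Fin.last r : Fin (r+1)) : ℕ) = ⊤
      rw [Fin.val_last]
      exact (greedy_top hgeo hrank f).1
    · intro i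
      show greedy f ((i.castSucc : Fin (r+1)) : ℕ) ⋖ greedy f ((i.succ : Fin (r+1)) : ℕ)
      rw [Fin.coe_castSucc, Fin.val_succ]
      exact greedy_cov hgeo hrank f i.isLt
  have hGlab : (List.ofFn fun i => f (labelSeq lab G i)) =
      List.ofFn (fun i : Fin r => f (nextAtom f (greedy f (i : ℕ)))) := by
    refine List.ofFn_inj.2 (funext fun i => ?_)
    show f (lab (G i.castSucc) (G i.succ)) = _
    simp only [hGdef, Fin.coe_castSucc, Fin.val_succ]
    rw [greedy_lab hgeo hrank f hf lab hlab i.isLt]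
  set seqG := List.ofFn (fun i : Fin r => f (nextAtom f (greedy f (i : ℕ)))) with hseqG
  have hGsorted : seqG.Pairwise (· ≤ ·) := by
    rw [hseqG]
    refine (List.sortedLE_ofFn_iff.2 (fun i j hij => ?_)).pairwise
    rcases eq_or_lt_of_le hij with rfl | hlt
    · exact le_rfl
    · exact (greedy_lab_strict hgeo hrank f hf hlt j.isLt).le
  have hlenl : l.length = r := by rw [hperm.length_eq, List.length_ofFn]
  have hseqGlen : seqG.length = r := by simp [hseqG]
  have hdoml : seqG = l ∨ List.Lex (· < ·) seqG l := by
    refine pointwise_lex _ _ (by omega) (fun k h1 h2 => ?_)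
    have hk : k < r := by omega
    have hg : seqG[k] = f (nextAtom f (greedy f k)) := by
      simp [hseqG]
    rw [hg]
    exact dom_lemma hgeo hrank f hf lab hlab hM hsort hperm hk h2
  constructor
  · rintro ⟨M', hM', heq⟩ M'' hM'' l'' hsort'' hperm''
    have hsorted' : (List.ofFn fun i => f (labelSeq lab M' i)).Pairwise (· ≤ ·) := by
      rw [heq]; exact hsort
    have hlseqG : l = seqG := by
      rw [← heq]
      exact uniq_labels hgeo hrank f hf lab hlab hM' hsorted'
    have hlen'' : l''.length = r := by rw [hperm''.length_eq, List.length_ofFn]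
    have hdom'' : seqG = l'' ∨ List.Lex (· < ·) seqG l'' := by
      refine pointwise_lex _ _ (by omega) (fun k h1 h2 => ?_)
      have hk : k < r := by omega
      have hg : seqG[k] = f (nextAtom f (greedy f k)) := by
        simp [hseqG]
      rw [hg]
      exact dom_lemma hgeo hrank f hf lab hlab hM'' hsort'' hperm'' hk h2
    rw [hlseqG]
    exact hdom''
  · intro hmin
    have h1 := hmin G hG seqG hGsorted (by rw [hGlab])
    have hleq : l = seqG := by
      rcases h1 with h | h
      · exact h
      · rcases hdoml with h' | h'
        · exact h'.symm
        · exact absurd h' (asymm h)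
    exact ⟨G, hG, by rw [hGlab, hleq]⟩
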